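/- Let $d \in \{1,3,5,\dots\}$ be odd, $k \in \mathbb{N}$ with $k > d/2$, $b > 0$, and $L := k - (d+1)/2 \in \mathbb{N}_0$. Then for every $x \in \mathbb{R}^d \setminus \{0\}$, $\frac{(4\pi)^{-d/2}}{\Gamma(k)} \int_0^\infty t^{k-d/2-1} e^{-b^2 t} e^{-\|x\|^2/(4t)}\,dt = \frac{(4\pi)^{(1-d)/2}}{\Gamma(k)(2b)^{2L+1}} \sum_{l=0}^L \frac{(2L-l)!}{l!\,(L-l)!} (2b\|x\|)^l e^{-b\|x\|}$. -/

import Mathlib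

open MeasureTheory Real

open MeasureTheory Real Set Filter Topology

lemma matern_integrable {b r : ℝ} (hb : 0 < b) (hr : 0 < r) (ν : ℝ) :
    IntegrableOn (fun t : ℝ => t ^ ν * Real.exp (-(b^2) * t) * Real.exp (-r^2 / (4*t))) (Ioi 0) := by
  set f : ℝ → ℝ := fun t => t ^ ν * Real.exp (-(b^2) * t) * Real.exp (-r^2 / (4*t)) with hf
  have hcont : ContinuousOn f (Ioi 0) := by
    apply ContinuousOn.mul
    apply ContinuousOn.mul
    · exact fun t ht => (Real.continuousAt_rpow_const t ν (Or.inl (ne_of_gt ht))).continuousWithinAt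
    · exact (Real.continuous_exp.comp (continuous_const.mul continuous_id)).continuousOn
    · apply Real.continuous_exp.comp_continuousOn
      apply ContinuousOn.div continuousOn_const
      · exact (continuous_const.mul continuous_id).continuousOn
      · intro t ht; have ht' : (0:ℝ) < t := ht; positivity
  have hmeas : ∀ s : Set ℝ, s ⊆ Ioi 0 → MeasurableSet s → AEStronglyMeasurable f (volume.restrict s) :=
    fun s hs hsm => (hcont.mono hs).aestronglyMeasurable hsm
  have hnonneg : ∀ t ∈ Ioi (0:ℝ), 0 ≤ f t := by
    intro t ht; have := ht.out; positivity
  have h1 : IntegrableOn f (Ioc 0 1) := by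
    set m : ℕ := ⌈|ν|⌉₊ with hm
    have hνm : 0 ≤ ν + m := by
      have h1 : |ν| ≤ (m:ℝ) := Nat.le_ceil _
      have h2 := neg_abs_le ν
      linarith
    refine ⟨(hcont.mono Ioc_subset_Ioi_self).aestronglyMeasurable measurableSet_Ioc,
      HasFiniteIntegral.restrict_of_bounded (C := (m.factorial : ℝ) * (4/r^2)^m)
        measure_Ioc_lt_top ?_⟩
    filter_upwards [ae_restrict_mem measurableSet_Ioc] with t ht
    have ht0 : 0 < t := ht.1
    have ht1 : t ≤ 1 := ht.2
    rw [Real.norm_eq_abs, abs_of_nonneg (hnonneg t ht0)]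
    have hb1 : Real.exp (-(b^2) * t) ≤ 1 := by
      rw [Real.exp_le_one_iff]; nlinarith
    have hexp : Real.exp (-r^2 / (4*t)) ≤ (m.factorial : ℝ) * (4/r^2)^m * t^(m:ℕ) := by
      have hx : 0 < r^2/(4*t) := by positivity
      have hfac : (0:ℝ) < m.factorial := Nat.cast_pos.mpr (Nat.factorial_pos m)
      have hkey : (r^2/(4*t))^m / (m.factorial:ℝ) ≤ Real.exp (r^2/(4*t)) :=
        Real.pow_div_factorial_le_exp _ hx.le m
      rw [div_le_iff₀ hfac] at hkey
      have h3 : Real.exp (-r^2/(4*t)) * (r^2/(4*t))^m ≤ (m.factorial:ℝ) := by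
        calc Real.exp (-r^2/(4*t)) * (r^2/(4*t))^m
            ≤ Real.exp (-r^2/(4*t)) * (Real.exp (r^2/(4*t)) * (m.factorial:ℝ)) :=
              mul_le_mul_of_nonneg_left hkey (Real.exp_nonneg _)
          _ = (m.factorial:ℝ) * (Real.exp (-r^2/(4*t)) * Real.exp (r^2/(4*t))) := by ring
          _ = (m.factorial:ℝ) := by rw [← Real.exp_add]; norm_num [neg_div]
      have h4 : Real.exp (-r^2/(4*t)) ≤ (m.factorial:ℝ) / (r^2/(4*t))^m := by
        rw [le_div_iff₀ (pow_pos hx m)]; exact h3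
      refine h4.trans (le_of_eq ?_)
      rw [div_pow, div_pow, mul_pow]
      field_simp
    calc f t ≤ t ^ ν * 1 * ((m.factorial : ℝ) * (4/r^2)^m * t^(m:ℕ)) := by
          apply mul_le_mul _ hexp (Real.exp_nonneg _) (by positivity)
          apply mul_le_mul_of_nonneg_left hb1 (Real.rpow_nonneg ht0.le _)
      _ = (m.factorial : ℝ) * (4/r^2)^m * t ^ (ν + m) := by
          rw [Real.rpow_add ht0, Real.rpow_natCast]; ring
      _ ≤ (m.factorial : ℝ) * (4/r^2)^m := by
          nth_rewrite 2 [show (m.factorial : ℝ) * (4/r^2)^m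
            = (m.factorial : ℝ) * (4/r^2)^m * 1 by ring]
          apply mul_le_mul_of_nonneg_left _ (by positivity)
          exact Real.rpow_le_one ht0.le ht1 hνm
  have h2 : IntegrableOn f (Ioi 1) := by
    have hg : IntegrableOn (fun t : ℝ => t ^ |ν| * Real.exp (-(b^2) * t)) (Ioi 1) := by
      apply IntegrableOn.mono_set _ (Ioi_subset_Ioi zero_le_one)
      have := integrableOn_rpow_mul_exp_neg_mul_rpow (neg_one_lt_zero.trans_le (abs_nonneg ν))
        one_pos (show (0:ℝ) < b^2 by positivity)
      apply this.congr_fun _ measurableSet_Ioi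
      intro t ht; simp [Real.rpow_one, neg_mul]
    apply Integrable.mono' hg ((hcont.mono (Ioi_subset_Ioi zero_le_one)).aestronglyMeasurable measurableSet_Ioi)
    filter_upwards [ae_restrict_mem measurableSet_Ioi] with t ht
    have ht1 : 1 < t := ht.out
    have ht0 : 0 < t := one_pos.trans ht1
    rw [Real.norm_eq_abs, abs_of_nonneg (hnonneg t ht0)]
    calc f t ≤ t ^ |ν| * Real.exp (-(b^2) * t) * 1 := by
          apply mul_le_mul _ _ (Real.exp_nonneg _) (by positivity)
          · apply mul_le_mul_of_nonneg_right _ (Real.exp_nonneg _)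
            exact Real.rpow_le_rpow_of_exponent_le ht1.le (le_abs_self ν)
          · rw [Real.exp_le_one_iff]
            have : 0 < r^2/(4*t) := by positivity
            simp only [neg_div]; linarith [this]
      _ = t ^ |ν| * Real.exp (-(b^2) * t) := by ring
  have : Ioc (0:ℝ) 1 ∪ Ioi 1 = Ioi 0 := Ioc_union_Ioi_eq_Ioi zero_le_one
  rw [← this]
  exact h1.union h2

section
variable {b r : ℝ}

lemma u_deriv (hb : 0 < b) (hr : 0 < r) {s : ℝ} (hs : 0 < s) :
    HasDerivAt (fun s : ℝ => b*s - r/(2*s)) (b + r/(2*s^2)) s := by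
  have h1 : HasDerivAt (fun s : ℝ => b*s) b s := by
    simpa using (hasDerivAt_id s).const_mul b
  have h2 : HasDerivAt (fun s : ℝ => r/(2*s)) ((0 * (2*s) - r*2)/(2*s)^2) s := by
    exact (hasDerivAt_const s r).div (by simpa using (hasDerivAt_id s).const_mul 2)
      (by positivity)
  convert h1.sub h2 using 1
  rfl
  rfl
  rfl
  field_simp
  ring

lemma u_inj (hb : 0 < b) (hr : 0 < r) : InjOn (fun s : ℝ => b*s - r/(2*s)) (Ioi 0) := by
  have : StrictMonoOn (fun s : ℝ => b*s - r/(2*s)) (Ioi 0) := by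
    intro s hs t ht hst
    have hs0 : (0:ℝ) < s := hs
    have ht0 : (0:ℝ) < t := ht
    have : r/(2*t) < r/(2*s) := by
      apply div_lt_div_of_pos_left hr (by positivity) (by linarith)
    have : b*s < b*t := by nlinarith
    dsimp only
    linarith
  exact this.injOn

lemma u_surj (hb : 0 < b) (hr : 0 < r) : (fun s : ℝ => b*s - r/(2*s)) '' (Ioi 0) = univ := by
  apply eq_univ_of_forall
  intro y
  set w := Real.sqrt (y^2 + 2*b*r) with hw
  have hw2 : w^2 = y^2 + 2*b*r := Real.sq_sqrt (by nlinarith)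
  have hwy : -y < w := by
    rcases le_or_gt (-y) 0 with h | h
    · exact lt_of_le_of_lt h (Real.sqrt_pos.mpr (by nlinarith))
    · have : (-y)^2 < w^2 := by rw [hw2]; nlinarith
      nlinarith [Real.sqrt_nonneg (y^2 + 2*b*r)]
  have hyw : 0 < y + w := by linarith
  refine ⟨(y + w)/(2*b), by rw [mem_Ioi]; exact div_pos hyw (by positivity), ?_⟩
  dsimp only
  field_simp
  nlinarith [hw2]

lemma gauss_int (hb : 0 < b) (hr : 0 < r) :
    ∫ s in Ioi (0:ℝ), (b + r/(2*s^2)) * Real.exp (-(b*s - r/(2*s))^2) = Real.sqrt π := by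
  have key := integral_image_eq_integral_abs_deriv_smul measurableSet_Ioi
    (fun s (hs : s ∈ Ioi (0:ℝ)) => (u_deriv hb hr hs).hasDerivWithinAt) (u_inj hb hr)
    (fun y => Real.exp (-y^2))
  rw [u_surj hb hr] at key
  have congr1 : EqOn (fun s : ℝ => |b + r/(2*s^2)| • Real.exp (-(b*s - r/(2*s))^2))
      (fun s : ℝ => (b + r/(2*s^2)) * Real.exp (-(b*s - r/(2*s))^2)) (Ioi 0) := by
    intro s hs
    have hs0 : (0:ℝ) < s := hs
    dsimp only
    rw [smul_eq_mul, abs_of_pos (by positivity)]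
  calc ∫ s in Ioi (0:ℝ), (b + r/(2*s^2)) * Real.exp (-(b*s - r/(2*s))^2)
      = ∫ s in Ioi (0:ℝ), |b + r/(2*s^2)| • Real.exp (-(b*s - r/(2*s))^2) :=
        (setIntegral_congr_fun measurableSet_Ioi congr1).symm
    _ = ∫ x in univ, Real.exp (-x^2) := key.symm
    _ = Real.sqrt π := by rw [setIntegral_univ]; simpa using integral_gaussian 1

lemma gauss_integrable (hb : 0 < b) (hr : 0 < r) :
    IntegrableOn (fun s : ℝ => (b + r/(2*s^2)) * Real.exp (-(b*s - r/(2*s))^2)) (Ioi 0) := by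
  have key := (integrableOn_image_iff_integrableOn_abs_deriv_smul measurableSet_Ioi
    (fun s (hs : s ∈ Ioi (0:ℝ)) => (u_deriv hb hr hs).hasDerivWithinAt) (u_inj hb hr)
    (fun y => Real.exp (-y^2))).mp
  rw [u_surj hb hr] at key
  have h0 : IntegrableOn (fun y : ℝ => Real.exp (-y^2)) univ := by
    rw [integrableOn_univ]
    simpa using integrable_exp_neg_mul_sq (show (0:ℝ) < 1 by norm_num)
  have := key h0
  apply this.congr_fun _ measurableSet_Ioi
  intro s hs
  have hs0 : (0:ℝ) < s := hs
  dsimp only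
  rw [smul_eq_mul, abs_of_pos (by positivity)]

end

section inv_sub
variable {c : ℝ}

lemma inv_deriv (hc : 0 < c) {t : ℝ} (ht : 0 < t) :
    HasDerivAt (fun t : ℝ => c/t) (-(c/t^2)) t := by
  have h := (hasDerivAt_inv ht.ne').const_mul c
  have h2 : (fun y : ℝ => c * y⁻¹) = fun y => c / y := by funext y; rw [div_eq_mul_inv]
  rw [h2] at h
  convert h using 1
  rfl
  rfl
  field_simp
lemma cinv_inj (hc : 0 < c) : InjOn (fun t : ℝ => c/t) (Ioi 0) := by
  intro s hs t ht hst
  have hs0 : (0:ℝ) < s := hs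
  have ht0 : (0:ℝ) < t := ht
  dsimp only at hst
  rw [div_eq_div_iff (by positivity) (by positivity)] at hst
  exact (mul_left_cancel₀ hc.ne' hst).symm

lemma inv_img (hc : 0 < c) : (fun t : ℝ => c/t) '' (Ioi 0) = Ioi 0 := by
  ext y
  constructor
  · rintro ⟨t, ht, rfl⟩
    have : (0:ℝ) < t := ht
    exact div_pos hc this
  · intro hy
    have hy0 : (0:ℝ) < y := hy
    exact ⟨c/y, div_pos hc hy0, by field_simp⟩

lemma inv_sub (hc : 0 < c) (g : ℝ → ℝ) :
    ∫ t in Ioi (0:ℝ), g t = ∫ t in Ioi (0:ℝ), (c/t^2) * g (c/t) := by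
  have key := integral_image_eq_integral_abs_deriv_smul measurableSet_Ioi
    (fun t (ht : t ∈ Ioi (0:ℝ)) => (inv_deriv hc ht).hasDerivWithinAt) (cinv_inj hc) g
  rw [inv_img hc] at key
  rw [key]
  apply setIntegral_congr_fun measurableSet_Ioi
  intro t ht
  have ht0 : (0:ℝ) < t := ht
  dsimp only
  rw [smul_eq_mul, abs_neg, abs_of_pos (by positivity)]

lemma inv_sub_integrable (hc : 0 < c) (g : ℝ → ℝ) (hg : IntegrableOn g (Ioi 0)) :
    IntegrableOn (fun t : ℝ => (c/t^2) * g (c/t)) (Ioi 0) := by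
  have key := (integrableOn_image_iff_integrableOn_abs_deriv_smul measurableSet_Ioi
    (fun t (ht : t ∈ Ioi (0:ℝ)) => (inv_deriv hc ht).hasDerivWithinAt) (cinv_inj hc) g).mp
  rw [inv_img hc] at key
  apply (key hg).congr_fun _ measurableSet_Ioi
  intro t ht
  have ht0 : (0:ℝ) < t := ht
  dsimp only
  rw [smul_eq_mul, abs_neg, abs_of_pos (by positivity)]

end inv_sub

section half
variable {b r : ℝ}

lemma gauss_refl (hb : 0 < b) (hr : 0 < r) :
    ∫ s in Ioi (0:ℝ), Real.exp (-(b*s - r/(2*s))^2)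
      = ∫ s in Ioi (0:ℝ), (r/(2*b*s^2)) * Real.exp (-(b*s - r/(2*s))^2) := by
  have hc : 0 < r/(2*b) := by positivity
  rw [inv_sub hc (fun s => Real.exp (-(b*s - r/(2*s))^2))]
  apply setIntegral_congr_fun measurableSet_Ioi
  intro s hs
  have hs0 : (0:ℝ) < s := hs
  dsimp only
  have h1 : r/(2*b)/s^2 = r/(2*b*s^2) := by field_simp
  have h2 : (b*(r/(2*b)/s) - r/(2*(r/(2*b)/s)))^2 = (b*s - r/(2*s))^2 := by
    field_simp
    ring
  rw [h1, h2]

lemma exp_u_integrable (hb : 0 < b) (hr : 0 < r) :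
    IntegrableOn (fun s : ℝ => Real.exp (-(b*s - r/(2*s))^2)) (Ioi 0) := by
  apply Integrable.mono' ((gauss_integrable hb hr).const_mul (1/b))
  · apply ContinuousOn.aestronglyMeasurable _ measurableSet_Ioi
    apply Real.continuous_exp.comp_continuousOn
    apply ContinuousOn.neg
    apply ContinuousOn.pow
    apply ContinuousOn.sub ((continuous_const.mul continuous_id).continuousOn)
    apply ContinuousOn.div continuousOn_const ((continuous_const.mul continuous_id).continuousOn)
    intro s hs
    have : (0:ℝ) < s := hs
    exact mul_ne_zero two_ne_zero this.ne'
  · filter_upwards [ae_restrict_mem measurableSet_Ioi] with s hs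
    have hs0 : (0:ℝ) < s := hs
    rw [Real.norm_eq_abs, abs_of_pos (Real.exp_pos _)]
    rw [show (1/b) * ((b + r/(2*s^2)) * Real.exp (-(b*s - r/(2*s))^2))
      = (1 + r/(2*b*s^2)) * Real.exp (-(b*s - r/(2*s))^2) by field_simp]
    nth_rewrite 1 [show Real.exp (-(b*s - r/(2*s))^2) = 1 * Real.exp (-(b*s - r/(2*s))^2) by ring]
    apply mul_le_mul_of_nonneg_right _ (Real.exp_nonneg _)
    have : 0 < r/(2*b*s^2) := by positivity
    linarith

lemma gauss_half (hb : 0 < b) (hr : 0 < r) :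
    ∫ s in Ioi (0:ℝ), Real.exp (-(b*s - r/(2*s))^2) = Real.sqrt π / (2*b) := by
  set e : ℝ → ℝ := fun s => Real.exp (-(b*s - r/(2*s))^2) with he
  have hint_e : IntegrableOn e (Ioi 0) := exp_u_integrable hb hr
  have hint_all : IntegrableOn (fun s : ℝ => (b + r/(2*s^2)) * e s) (Ioi 0) :=
    gauss_integrable hb hr
  have hint_e2 : IntegrableOn (fun s : ℝ => (r/(2*s^2)) * e s) (Ioi 0) := by
    have h3 : IntegrableOn (fun s : ℝ => ((b + r/(2*s^2)) * e s) - b * e s) (Ioi 0) :=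
      hint_all.sub (hint_e.const_mul b)
    apply h3.congr_fun _ measurableSet_Ioi
    intro s hs
    dsimp only
    ring
  have hsplit : Real.sqrt π = b * (∫ s in Ioi (0:ℝ), e s) + ∫ s in Ioi (0:ℝ), (r/(2*s^2)) * e s := by
    rw [← gauss_int hb hr, ← integral_const_mul]
    rw [← integral_add (hint_e.const_mul b) hint_e2]
    apply setIntegral_congr_fun measurableSet_Ioi
    intro s hs
    dsimp only
    ring
  have hswap : ∫ s in Ioi (0:ℝ), (r/(2*s^2)) * e s = b * ∫ s in Ioi (0:ℝ), e s := by
    rw [gauss_refl hb hr, ← integral_const_mul]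
    apply setIntegral_congr_fun measurableSet_Ioi
    intro s hs
    have hs0 : (0:ℝ) < s := hs
    dsimp only
    rw [← mul_assoc]
    congr 1
    field_simp
  rw [hswap] at hsplit
  have : Real.sqrt π = 2 * b * ∫ s in Ioi (0:ℝ), e s := by linarith
  rw [eq_div_iff (by positivity)]
  linarith

end half

section Jvals
variable {b r : ℝ}

lemma J_half (hb : 0 < b) (hr : 0 < r) :
    ∫ t in Ioi (0:ℝ), t ^ (-(1:ℝ)/2) * Real.exp (-(b^2)*t) * Real.exp (-r^2/(4*t))
      = Real.sqrt π / b * Real.exp (-(b*r)) := by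
  rw [← integral_comp_rpow_Ioi
    (fun t => t ^ (-(1:ℝ)/2) * Real.exp (-(b^2)*t) * Real.exp (-r^2/(4*t)))
    (two_ne_zero (α := ℝ))]
  have hptwise : EqOn (fun x : ℝ => (|(2:ℝ)| * x ^ ((2:ℝ)-1)) •
        ((x^(2:ℝ)) ^ (-(1:ℝ)/2) * Real.exp (-(b^2)*(x^(2:ℝ))) * Real.exp (-r^2/(4*(x^(2:ℝ))))))
      (fun x : ℝ => (2 * Real.exp (-(b*r))) * Real.exp (-(b*x - r/(2*x))^2)) (Ioi 0) := by
    intro x hx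
    have hx0 : (0:ℝ) < x := hx
    have hsq : x ^ (2:ℝ) = x^2 := by
      rw [show (2:ℝ) = ((2:ℕ):ℝ) by norm_num, Real.rpow_natCast]
    have hpow : (x^(2:ℝ)) ^ (-(1:ℝ)/2) = x⁻¹ := by
      rw [← Real.rpow_mul hx0.le]
      norm_num
      exact Real.rpow_neg_one x
    have hexp : Real.exp (-(b^2)*(x^2)) * Real.exp (-r^2/(4*(x^2)))
        = Real.exp (-(b*x - r/(2*x))^2) * Real.exp (-(b*r)) := by
      rw [← Real.exp_add, ← Real.exp_add]
      congr 1
      field_simp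
      ring
    dsimp only
    rw [smul_eq_mul, hpow, hsq]
    rw [show |(2:ℝ)| * x ^ ((2:ℝ)-1) * (x⁻¹ * Real.exp (-(b^2)*(x^2)) * Real.exp (-r^2/(4*(x^2))))
      = (|(2:ℝ)| * x ^ ((2:ℝ)-1) * x⁻¹) * (Real.exp (-(b^2)*(x^2)) * Real.exp (-r^2/(4*(x^2)))) by ring,
      hexp]
    have : |(2:ℝ)| * x ^ ((2:ℝ)-1) * x⁻¹ = 2 := by
      rw [abs_of_pos (by norm_num : (0:ℝ) < 2)]
      norm_num
      field_simp
    rw [this]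
    ring
  rw [setIntegral_congr_fun measurableSet_Ioi hptwise, integral_const_mul, gauss_half hb hr]
  field_simp

lemma J_neg_half (hb : 0 < b) (hr : 0 < r) :
    ∫ t in Ioi (0:ℝ), t ^ (-(3:ℝ)/2) * Real.exp (-(b^2)*t) * Real.exp (-r^2/(4*t))
      = 2 * Real.sqrt π / r * Real.exp (-(b*r)) := by
  set c : ℝ := r^2/(4*b^2) with hc_def
  have hc : 0 < c := by positivity
  rw [inv_sub hc (fun t => t ^ (-(3:ℝ)/2) * Real.exp (-(b^2)*t) * Real.exp (-r^2/(4*t)))]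
  have hptwise : EqOn
      (fun t : ℝ => (c/t^2) * ((c/t) ^ (-(3:ℝ)/2) * Real.exp (-(b^2)*(c/t)) * Real.exp (-r^2/(4*(c/t)))))
      (fun t : ℝ => (2*b/r) * (t ^ (-(1:ℝ)/2) * Real.exp (-(b^2)*t) * Real.exp (-r^2/(4*t)))) (Ioi 0) := by
    intro t ht
    have ht0 : (0:ℝ) < t := ht
    have he1 : Real.exp (-(b^2)*(c/t)) = Real.exp (-r^2/(4*t)) := by
      congr 1
      rw [hc_def]
      field_simp
    have he2 : Real.exp (-r^2/(4*(c/t))) = Real.exp (-(b^2)*t) := by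
      congr 1
      rw [hc_def]
      field_simp
    have hfac : (c/t^2) * (c/t) ^ (-(3:ℝ)/2) = (2*b/r) * t ^ (-(1:ℝ)/2) := by
      have h1 : (c/t) ^ (-(3:ℝ)/2) = c ^ (-(3:ℝ)/2) * t ^ ((3:ℝ)/2) := by
        rw [Real.div_rpow hc.le ht0.le, div_eq_mul_inv, ← Real.rpow_neg ht0.le]
        norm_num
      have h2 : c/t^2 = c ^ (1:ℝ) * t ^ (-(2:ℝ)) := by
        rw [Real.rpow_one, div_eq_mul_inv, ← Real.rpow_natCast t 2, ← Real.rpow_neg ht0.le]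
        norm_num
      rw [h1, h2, show c ^ (1:ℝ) * t ^ (-(2:ℝ)) * (c ^ (-(3:ℝ)/2) * t ^ ((3:ℝ)/2))
        = (c ^ (1:ℝ) * c ^ (-(3:ℝ)/2)) * (t ^ (-(2:ℝ)) * t ^ ((3:ℝ)/2)) by ring,
        ← Real.rpow_add hc, ← Real.rpow_add ht0]
      have hcr : c ^ (-(1:ℝ)/2) = 2*b/r := by
        have : c = (r/(2*b)) ^ (2:ℝ) := by
          rw [show ((2:ℝ)) = ((2:ℕ):ℝ) by norm_num, Real.rpow_natCast, div_pow, hc_def]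
          congr 1
          ring
        rw [this, ← Real.rpow_mul (by positivity)]
        norm_num
        rw [Real.rpow_neg_one]
        rw [inv_div]
      rw [show (1:ℝ) + -(3)/2 = -(1)/2 by norm_num, show (-(2):ℝ) + 3/2 = -(1)/2 by norm_num, hcr]
    dsimp only
    calc (c/t^2) * ((c/t) ^ (-(3:ℝ)/2) * Real.exp (-(b^2)*(c/t)) * Real.exp (-r^2/(4*(c/t))))
        = ((c/t^2) * (c/t) ^ (-(3:ℝ)/2)) * (Real.exp (-(b^2)*(c/t)) * Real.exp (-r^2/(4*(c/t)))) := by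
          ring
      _ = ((2*b/r) * t ^ (-(1:ℝ)/2)) * (Real.exp (-r^2/(4*t)) * Real.exp (-(b^2)*t)) := by
          rw [hfac, he1, he2]
      _ = (2*b/r) * (t ^ (-(1:ℝ)/2) * Real.exp (-(b^2)*t) * Real.exp (-r^2/(4*t))) := by ring
  rw [setIntegral_congr_fun measurableSet_Ioi hptwise, integral_const_mul, J_half hb hr]
  field_simp

end Jvals

section rec
variable {b r : ℝ}

-- derivative of t ↦ t^ν * exp(-(b²)t) * exp(-r²/(4t))
lemma g_deriv (hb : 0 < b) (hr : 0 < r) (ν : ℝ) {t : ℝ} (ht : 0 < t) :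
    HasDerivAt (fun t : ℝ => t ^ ν * Real.exp (-(b^2)*t) * Real.exp (-r^2/(4*t)))
      (ν * (t ^ (ν-1) * Real.exp (-(b^2)*t) * Real.exp (-r^2/(4*t)))
        - b^2 * (t ^ ν * Real.exp (-(b^2)*t) * Real.exp (-r^2/(4*t)))
        + (r^2/4) * (t ^ (ν-2) * Real.exp (-(b^2)*t) * Real.exp (-r^2/(4*t)))) t := by
  have h1 : HasDerivAt (fun t : ℝ => t ^ ν) (ν * t ^ (ν-1)) t :=
    Real.hasDerivAt_rpow_const (Or.inl ht.ne')
  have h2 : HasDerivAt (fun t : ℝ => Real.exp (-(b^2)*t)) (-(b^2) * Real.exp (-(b^2)*t)) t := by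
    have hlin : HasDerivAt (fun y : ℝ => -(b^2) * y) (-(b^2) * 1) t := (hasDerivAt_id t).const_mul (-(b^2))
    rw [mul_one] at hlin
    have := hlin.exp
    rw [mul_comm] at this
    exact this
  have h3 : HasDerivAt (fun t : ℝ => Real.exp (-r^2/(4*t)))
      (Real.exp (-r^2/(4*t)) * (r^2/4 * (t^2)⁻¹)) t := by
    have hinner : HasDerivAt (fun t : ℝ => -r^2/(4*t)) (r^2/4 * (t^2)⁻¹) t := by
      have h := (hasDerivAt_inv ht.ne').const_mul (-r^2/4)
      have heq : (fun y : ℝ => (-r^2/4) * y⁻¹) = fun y : ℝ => -r^2/(4*y) := by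
        funext y
        rcases eq_or_ne y 0 with rfl | hy
        · simp
        · field_simp
      rw [heq] at h
      convert h using 1
      rfl
      rfl
      field_simp
    exact hinner.exp
  have := (h1.mul h2).mul h3
  convert this using 1
  rfl
  rfl
  rfl
  have ht2 : t ^ (ν-2) = t ^ ν * (t^2)⁻¹ := by
    rw [← Real.rpow_natCast t 2, ← Real.rpow_neg ht.le, ← Real.rpow_add ht]
    norm_num [sub_eq_add_neg]
  rw [ht2]
  simp only [Pi.mul_apply]
  ring

lemma g_tendsto_top (hb : 0 < b) (hr : 0 < r) (ν : ℝ) :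
    Tendsto (fun t : ℝ => t ^ ν * Real.exp (-(b^2)*t) * Real.exp (-r^2/(4*t))) atTop (𝓝 0) := by
  have h1 : Tendsto (fun t : ℝ => t ^ ν * Real.exp (-(b^2)*t)) atTop (𝓝 0) := by
    have := tendsto_rpow_mul_exp_neg_mul_atTop_nhds_zero ν (b^2) (by positivity)
    simpa [neg_mul] using this
  have h2 : Tendsto (fun t : ℝ => Real.exp (-r^2/(4*t))) atTop (𝓝 1) := by
    rw [show (1:ℝ) = Real.exp 0 by simp]
    apply (Real.continuous_exp.tendsto 0).comp
    have h0 : Tendsto (fun t : ℝ => (-r^2/4) * t⁻¹) atTop (𝓝 ((-r^2/4) * 0)) :=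
      tendsto_inv_atTop_zero.const_mul (-r^2/4)
    rw [mul_zero] at h0
    apply h0.congr
    intro t
    field_simp
  simpa using h1.mul h2

lemma g_tendsto_zero (hb : 0 < b) (hr : 0 < r) (ν : ℝ) :
    Tendsto (fun t : ℝ => t ^ ν * Real.exp (-(b^2)*t) * Real.exp (-r^2/(4*t))) (𝓝[>] (0:ℝ)) (𝓝 0) := by
  have h1 : Tendsto (fun t : ℝ => t ^ ν * Real.exp (-r^2/(4*t))) (𝓝[>] (0:ℝ)) (𝓝 0) := by
    have hbase : Tendsto (fun u : ℝ => u ^ (-ν) * Real.exp (-(r^2/4) * u)) atTop (𝓝 0) :=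
      tendsto_rpow_mul_exp_neg_mul_atTop_nhds_zero (-ν) (r^2/4) (by positivity)
    have hcomp := hbase.comp tendsto_inv_nhdsGT_zero
    apply hcomp.congr'
    filter_upwards [self_mem_nhdsWithin] with t ht
    have ht0 : (0:ℝ) < t := ht
    have : (t⁻¹) ^ (-ν) = t ^ ν := by
      rw [← Real.rpow_neg_one t, ← Real.rpow_mul ht0.le]
      norm_num
    dsimp [Function.comp]
    rw [this]
    congr 2
    field_simp
  have h2 : Tendsto (fun t : ℝ => Real.exp (-(b^2)*t)) (𝓝[>] (0:ℝ)) (𝓝 1) := by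
    rw [show (1:ℝ) = Real.exp 0 by simp]
    apply (Real.continuous_exp.tendsto 0).comp
    have h0 : Tendsto (fun t : ℝ => -(b^2)*t) (𝓝 (0:ℝ)) (𝓝 (-(b^2)*0)) :=
      (continuous_const.mul continuous_id).tendsto (0:ℝ)
    rw [mul_zero] at h0
    exact h0.mono_left nhdsWithin_le_nhds
  have := h1.mul h2
  simp only [zero_mul] at this
  apply this.congr
  intro t
  ring
end rec

section ftc
variable {b r : ℝ}

lemma J_tot (hb : 0 < b) (hr : 0 < r)
    (hInt : ∀ ν : ℝ, IntegrableOn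
      (fun t : ℝ => t ^ ν * Real.exp (-(b^2)*t) * Real.exp (-r^2/(4*t))) (Ioi 0)) (ν : ℝ) :
    ν * (∫ t in Ioi (0:ℝ), t ^ (ν-1) * Real.exp (-(b^2)*t) * Real.exp (-r^2/(4*t)))
      - b^2 * (∫ t in Ioi (0:ℝ), t ^ ν * Real.exp (-(b^2)*t) * Real.exp (-r^2/(4*t)))
      + (r^2/4) * (∫ t in Ioi (0:ℝ), t ^ (ν-2) * Real.exp (-(b^2)*t) * Real.exp (-r^2/(4*t))) = 0 := by
  set E : ℝ → ℝ := fun t => Real.exp (-(b^2)*t) * Real.exp (-r^2/(4*t)) with hE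
  set g : ℝ → ℝ := fun t => t ^ ν * Real.exp (-(b^2)*t) * Real.exp (-r^2/(4*t)) with hg
  set D : ℝ → ℝ := fun t =>
      ν * (t ^ (ν-1) * Real.exp (-(b^2)*t) * Real.exp (-r^2/(4*t)))
        - b^2 * (t ^ ν * Real.exp (-(b^2)*t) * Real.exp (-r^2/(4*t)))
        + (r^2/4) * (t ^ (ν-2) * Real.exp (-(b^2)*t) * Real.exp (-r^2/(4*t))) with hD
  have hDint : IntegrableOn D (Ioi 0) := by
    have h1 := (hInt (ν-1)).const_mul ν
    have h2 := (hInt ν).const_mul (b^2)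
    have h3 := (hInt (ν-2)).const_mul (r^2/4)
    exact (h1.sub h2).add h3
  have step : ∀ ε : ℝ, 0 < ε → ∫ t in Ioi ε, D t = - g ε := by
    intro ε hε
    have := integral_Ioi_of_hasDerivAt_of_tendsto' (f := g) (f' := D) (a := ε) (m := 0)
      (fun x hx => g_deriv hb hr ν (lt_of_lt_of_le hε hx))
      (hDint.mono_set (Ioi_subset_Ioi hε.le))
      (g_tendsto_top hb hr ν)
    rw [this, zero_sub]
  set u : ℕ → ℝ := fun n => 1/(n+1) with hu
  have hu_pos : ∀ n, 0 < u n := fun n => by positivity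
  have hmono : Monotone (fun n => Ioi (u n)) := by
    intro n m hnm
    apply Ioi_subset_Ioi
    apply one_div_le_one_div_of_le (by positivity)
    have : (n:ℝ) ≤ m := Nat.cast_le.mpr hnm
    linarith
  have hunion : (⋃ n, Ioi (u n)) = Ioi (0:ℝ) := by
    ext x
    simp only [mem_iUnion, mem_Ioi]
    constructor
    · rintro ⟨n, hn⟩
      exact lt_trans (hu_pos n) hn
    · intro hx
      obtain ⟨n, hn⟩ := exists_nat_one_div_lt hx
      exact ⟨n, hn⟩
  have htend1 : Tendsto (fun n => ∫ t in Ioi (u n), D t) atTop (𝓝 (∫ t in Ioi (0:ℝ), D t)) := by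
    have := tendsto_setIntegral_of_monotone (fun n => measurableSet_Ioi) hmono
      (by rw [hunion]; exact hDint)
    rwa [hunion] at this
  have htend2 : Tendsto (fun n => ∫ t in Ioi (u n), D t) atTop (𝓝 0) := by
    have heq : (fun n => ∫ t in Ioi (u n), D t) = fun n => - g (u n) := by
      funext n; exact step (u n) (hu_pos n)
    rw [heq]
    rw [show (0:ℝ) = -0 by norm_num]
    apply Tendsto.neg
    apply (g_tendsto_zero hb hr ν).comp
    rw [tendsto_nhdsWithin_iff]
    constructor
    · exact tendsto_one_div_add_atTop_nhds_zero_nat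
    · exact Eventually.of_forall (fun n => hu_pos n)
  have hDzero : ∫ t in Ioi (0:ℝ), D t = 0 := tendsto_nhds_unique htend1 htend2
  have hI1 : Integrable (fun t : ℝ => ν * (t ^ (ν-1) * Real.exp (-(b^2)*t) * Real.exp (-r^2/(4*t))))
      (volume.restrict (Ioi 0)) := (hInt (ν-1)).const_mul ν
  have hI2 : Integrable (fun t : ℝ => b^2 * (t ^ ν * Real.exp (-(b^2)*t) * Real.exp (-r^2/(4*t))))
      (volume.restrict (Ioi 0)) := (hInt ν).const_mul (b^2)
  have hI3 : Integrable (fun t : ℝ => (r^2/4) * (t ^ (ν-2) * Real.exp (-(b^2)*t) * Real.exp (-r^2/(4*t))))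
      (volume.restrict (Ioi 0)) := (hInt (ν-2)).const_mul (r^2/4)
  have hI12 : Integrable (fun t : ℝ => ν * (t ^ (ν-1) * Real.exp (-(b^2)*t) * Real.exp (-r^2/(4*t)))
      - b^2 * (t ^ ν * Real.exp (-(b^2)*t) * Real.exp (-r^2/(4*t))))
      (volume.restrict (Ioi 0)) := hI1.sub hI2
  have expand : ∫ t in Ioi (0:ℝ), D t
      = ν * (∫ t in Ioi (0:ℝ), t ^ (ν-1) * Real.exp (-(b^2)*t) * Real.exp (-r^2/(4*t)))
      - b^2 * (∫ t in Ioi (0:ℝ), t ^ ν * Real.exp (-(b^2)*t) * Real.exp (-r^2/(4*t)))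
      + (r^2/4) * (∫ t in Ioi (0:ℝ), t ^ (ν-2) * Real.exp (-(b^2)*t) * Real.exp (-r^2/(4*t))) := by
    rw [hD]
    rw [integral_add hI12 hI3, integral_sub hI1 hI2, integral_const_mul, integral_const_mul,
      integral_const_mul]
  rw [expand] at hDzero
  linarith

noncomputable def cc (n l : ℕ) : ℝ := ((2*n - l).factorial : ℝ) / ((l.factorial : ℝ) * ((n-l).factorial : ℝ))

lemma cc_A (n : ℕ) : cc (n+2) 0 = 2*(2*(n:ℝ)+3) * cc (n+1) 0 := by
  simp only [cc, Nat.sub_zero, Nat.factorial_zero]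
  rw [show 2*(n+2) = (2*n+3)+1 by ring, show 2*(n+1) = (2*n+1)+1 by ring,
    Nat.factorial_succ ((2*n+3)), show (2*n+3) = (2*n+2)+1 by ring, Nat.factorial_succ (2*n+2),
    Nat.factorial_succ (n+1)]
  have h1 : ((2*n+2).factorial : ℝ) ≠ 0 := Nat.cast_ne_zero.mpr (Nat.factorial_ne_zero _)
  have h2 : ((n+1).factorial : ℝ) ≠ 0 := Nat.cast_ne_zero.mpr (Nat.factorial_ne_zero _)
  push_cast
  rw [show (2*(n:ℝ)+2) = 2*((n:ℝ)+1) by ring]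
  field_simp
  ring

lemma cc_B (n : ℕ) : cc (n+2) 1 = 2*(2*(n:ℝ)+3) * cc (n+1) 1 := by
  simp only [cc, Nat.factorial_one]
  rw [show 2*(n+2)-1 = (2*n+2)+1 by omega, show 2*(n+1)-1 = (2*n)+1 by omega,
    show (n+2)-1 = n+1 by omega, show (n+1)-1 = n by omega,
    Nat.factorial_succ (2*n+2), show (2*n+2) = (2*n+1)+1 by ring, Nat.factorial_succ (2*n+1),
    Nat.factorial_succ n]
  have h1 : ((2*n+1).factorial : ℝ) ≠ 0 := Nat.cast_ne_zero.mpr (Nat.factorial_ne_zero _)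
  have h2 : ((n).factorial : ℝ) ≠ 0 := Nat.cast_ne_zero.mpr (Nat.factorial_ne_zero _)
  push_cast
  field_simp
  ring

lemma cc_C (n : ℕ) : cc (n+2) (n+2) = cc n n := by
  simp only [cc]
  rw [show 2*(n+2)-(n+2) = n+2 by omega, show (n+2)-(n+2) = 0 by omega,
    show 2*n-n = n by omega, Nat.sub_self]
  simp only [Nat.factorial_zero, Nat.cast_one, mul_one, one_mul]
  rw [div_self (Nat.cast_ne_zero.mpr (Nat.factorial_ne_zero _)),
    div_self (Nat.cast_ne_zero.mpr (Nat.factorial_ne_zero _))]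

lemma cc_D (n l : ℕ) (hl : l < n) :
    cc (n+2) (l+2) = 2*(2*(n:ℝ)+3) * cc (n+1) (l+2) + cc n l := by
  obtain ⟨j, rfl⟩ : ∃ j, n = l + j + 1 := ⟨n - l - 1, by omega⟩
  simp only [cc]
  rw [show 2*(l+j+1+2)-(l+2) = (l+2*j+2)+2 by omega,
    show 2*(l+j+1+1)-(l+2) = (l+2*j+2) by omega,
    show 2*(l+j+1)-l = (l+2*j+2) by omega,
    show (l+j+1+2)-(l+2) = j+1 by omega,
    show (l+j+1+1)-(l+2) = j by omega,
    show (l+j+1)-l = j+1 by omega,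
    show (l+2*j+2)+2 = ((l+2*j+2)+1)+1 by ring,
    Nat.factorial_succ ((l+2*j+2)+1), Nat.factorial_succ (l+2*j+2),
    Nat.factorial_succ (j), Nat.factorial_succ (l+1), Nat.factorial_succ l]
  have h1 : ((l+2*j+2).factorial : ℝ) ≠ 0 := Nat.cast_ne_zero.mpr (Nat.factorial_ne_zero _)
  have h2 : ((j).factorial : ℝ) ≠ 0 := Nat.cast_ne_zero.mpr (Nat.factorial_ne_zero _)
  have h3 : ((l).factorial : ℝ) ≠ 0 := Nat.cast_ne_zero.mpr (Nat.factorial_ne_zero _)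
  push_cast
  field_simp
  ring

lemma comb (n : ℕ) (z : ℝ) :
    ∑ l ∈ Finset.range (n+3), cc (n+2) l * z^l
      = 2*(2*(n:ℝ)+3) * ∑ l ∈ Finset.range (n+2), cc (n+1) l * z^l
        + z^2 * ∑ l ∈ Finset.range (n+1), cc n l * z^l := by
  rw [Finset.sum_range_succ' (fun l => cc (n+2) l * z^l) (n+2),
    Finset.sum_range_succ' (fun l => cc (n+2) (l+1) * z^(l+1)) (n+1),
    Finset.sum_range_succ (fun l => cc (n+2) (l+1+1) * z^(l+1+1)) n,
    Finset.sum_range_succ' (fun l => cc (n+1) l * z^l) (n+1),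
    Finset.sum_range_succ' (fun l => cc (n+1) (l+1) * z^(l+1)) n,
    Finset.mul_sum, Finset.sum_range_succ (fun l => z^2 * (cc n l * z^l)) n]
  have hsum : ∀ l ∈ Finset.range n,
      cc (n+2) (l+1+1) * z^(l+1+1)
        = 2*(2*(n:ℝ)+3) * (cc (n+1) (l+1+1) * z^(l+1+1)) + z^2 * (cc n l * z^l) := by
    intro l hl
    rw [cc_D n l (Finset.mem_range.mp hl)]
    ring
  rw [Finset.sum_congr rfl hsum, Finset.sum_add_distrib, cc_A n, cc_B n, cc_C n, ← Finset.mul_sum]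
  ring

section main
variable {b r : ℝ}

lemma matern_closed (hb : 0 < b) (hr : 0 < r) : ∀ n : ℕ,
    ∫ t in Ioi (0:ℝ), t ^ ((n:ℝ) - 1/2) * Real.exp (-(b^2)*t) * Real.exp (-r^2/(4*t))
      = 2*Real.sqrt π/(2*b)^(2*n+1) * Real.exp (-(b*r))
          * ∑ l ∈ Finset.range (n+1), cc n l * (2*b*r)^l := by
  have hInt := matern_integrable hb hr
  have hb2 : (b:ℝ)^2 ≠ 0 := by positivity
  have h2b : (2*b) ≠ 0 := by positivity
  have base0 : ∫ t in Ioi (0:ℝ), t ^ (((0:ℕ):ℝ) - 1/2) * Real.exp (-(b^2)*t) * Real.exp (-r^2/(4*t))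
      = 2*Real.sqrt π/(2*b)^(2*0+1) * Real.exp (-(b*r))
          * ∑ l ∈ Finset.range (0+1), cc 0 l * (2*b*r)^l := by
    simp only [show ((0:ℕ):ℝ) - 1/2 = -(1:ℝ)/2 by norm_num]
    rw [J_half hb hr]
    rw [Finset.sum_range_one]
    have hcc : cc 0 0 = 1 := by simp [cc]
    rw [hcc]
    field_simp
    ring
  have base1 : ∫ t in Ioi (0:ℝ), t ^ (((1:ℕ):ℝ) - 1/2) * Real.exp (-(b^2)*t) * Real.exp (-r^2/(4*t))
      = 2*Real.sqrt π/(2*b)^(2*1+1) * Real.exp (-(b*r))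
          * ∑ l ∈ Finset.range (1+1), cc 1 l * (2*b*r)^l := by
    have h := J_tot hb hr hInt (1/2)
    simp only [show (1:ℝ)/2 - 1 = -(1:ℝ)/2 by norm_num,
      show (1:ℝ)/2 - 2 = -(3:ℝ)/2 by norm_num] at h
    rw [J_half hb hr, J_neg_half hb hr] at h
    simp only [show ((1:ℕ):ℝ) - 1/2 = (1:ℝ)/2 by norm_num]
    have hcc0 : cc 1 0 = 2 := by norm_num [cc, Nat.factorial]
    have hcc1 : cc 1 1 = 1 := by simp [cc]
    rw [Finset.sum_range_succ, Finset.sum_range_one, hcc0, hcc1]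
    apply mul_left_cancel₀ hb2
    have hrec : b^2 * ∫ t in Ioi (0:ℝ), t ^ ((1:ℝ)/2) * Real.exp (-(b^2)*t) * Real.exp (-r^2/(4*t))
        = 1/2 * (Real.sqrt π / b * Real.exp (-(b*r))) + r^2/4 * (2*Real.sqrt π/r * Real.exp (-(b*r))) := by
      linarith
    rw [hrec]
    field_simp
    ring
  have step : ∀ k : ℕ,
      (∫ t in Ioi (0:ℝ), t ^ ((k:ℝ) - 1/2) * Real.exp (-(b^2)*t) * Real.exp (-r^2/(4*t))
        = 2*Real.sqrt π/(2*b)^(2*k+1) * Real.exp (-(b*r))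
            * ∑ l ∈ Finset.range (k+1), cc k l * (2*b*r)^l) →
      (∫ t in Ioi (0:ℝ), t ^ (((k+1:ℕ):ℝ) - 1/2) * Real.exp (-(b^2)*t) * Real.exp (-r^2/(4*t))
        = 2*Real.sqrt π/(2*b)^(2*(k+1)+1) * Real.exp (-(b*r))
            * ∑ l ∈ Finset.range (k+1+1), cc (k+1) l * (2*b*r)^l) →
      (∫ t in Ioi (0:ℝ), t ^ (((k+2:ℕ):ℝ) - 1/2) * Real.exp (-(b^2)*t) * Real.exp (-r^2/(4*t))
        = 2*Real.sqrt π/(2*b)^(2*(k+2)+1) * Real.exp (-(b*r))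
            * ∑ l ∈ Finset.range (k+2+1), cc (k+2) l * (2*b*r)^l) := by
    intro k ihk ihk1
    have h := J_tot hb hr hInt ((k:ℝ) + 3/2)
    simp only [show (k:ℝ) + 3/2 - 1 = ((k+1:ℕ):ℝ) - 1/2 by push_cast; ring] at h
    simp only [show (k:ℝ) + 3/2 - 2 = ((k:ℕ):ℝ) - 1/2 by push_cast; ring] at h
    simp only [show (k:ℝ) + 3/2 = ((k+2:ℕ):ℝ) - 1/2 by push_cast; ring] at h
    rw [ihk, ihk1] at h
    apply mul_left_cancel₀ hb2
    have hrec : b^2 * ∫ t in Ioi (0:ℝ), t ^ (((k+2:ℕ):ℝ) - 1/2) * Real.exp (-(b^2)*t) * Real.exp (-r^2/(4*t))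
        = (((k+2:ℕ):ℝ) - 1/2) * (2*Real.sqrt π/(2*b)^(2*(k+1)+1) * Real.exp (-(b*r))
            * ∑ l ∈ Finset.range (k+1+1), cc (k+1) l * (2*b*r)^l)
          + r^2/4 * (2*Real.sqrt π/(2*b)^(2*k+1) * Real.exp (-(b*r))
            * ∑ l ∈ Finset.range (k+1), cc k l * (2*b*r)^l) := by
      linarith
    rw [hrec]
    rw [show k+2+1 = k+3 by ring, comb k (2*b*r)]
    have hpow1 : ((2*b)^(2*(k+2)+1) : ℝ) = (2*b)^(2*(k+1)+1) * (2*b)^2 := by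
      rw [show 2*(k+2)+1 = (2*(k+1)+1) + 2 by ring, pow_add]
    have hpow2 : ((2*b)^(2*(k+1)+1) : ℝ) = (2*b)^(2*k+1) * (2*b)^2 := by
      rw [show 2*(k+1)+1 = (2*k+1) + 2 by ring, pow_add]
    rw [hpow1, hpow2]
    have hne1 : ((2*b)^(2*k+1) : ℝ) ≠ 0 := pow_ne_zero _ h2b
    push_cast
    field_simp
    ring
  intro n
  have key : ∀ m : ℕ,
      (∫ t in Ioi (0:ℝ), t ^ ((m:ℝ) - 1/2) * Real.exp (-(b^2)*t) * Real.exp (-r^2/(4*t))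
        = 2*Real.sqrt π/(2*b)^(2*m+1) * Real.exp (-(b*r))
            * ∑ l ∈ Finset.range (m+1), cc m l * (2*b*r)^l)
      ∧ (∫ t in Ioi (0:ℝ), t ^ (((m+1:ℕ):ℝ) - 1/2) * Real.exp (-(b^2)*t) * Real.exp (-r^2/(4*t))
        = 2*Real.sqrt π/(2*b)^(2*(m+1)+1) * Real.exp (-(b*r))
            * ∑ l ∈ Finset.range (m+1+1), cc (m+1) l * (2*b*r)^l) := by
    intro m
    induction m with
    | zero => exact ⟨base0, base1⟩
    | succ p ih => exact ⟨ih.2, step p ih.1 ih.2⟩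
  exact (key n).1

end main


/-- closed form of the Matérn kernel in odd space dimensions: for odd `d`,
`k > d/2`, `b > 0`, `L = k - (d+1)/2` and `x ≠ 0`,
`(4π)^{-d/2}/Γ(k) ∫_0^∞ t^{k-d/2-1} e^{-b²t} e^{-‖x‖²/(4t)} dt
  = (4π)^{(1-d)/2}/(Γ(k)(2b)^{2L+1}) ∑_{l=0}^L (2L-l)!/(l!(L-l)!) (2b‖x‖)^l e^{-b‖x‖}`. -/
theorem stmt_15 (d k : ℕ) (hd : Odd d) (hk : (d : ℝ) < 2 * k) (b : ℝ) (hb : 0 < b)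
    (L : ℕ) (hL : L = k - (d + 1) / 2) (x : EuclideanSpace ℝ (Fin d)) (hx : x ≠ 0) :
    (4 * π) ^ (-(d : ℝ) / 2) / Real.Gamma k *
        ∫ t in Set.Ioi (0 : ℝ),
          t ^ ((k : ℝ) - (d : ℝ) / 2 - 1) * Real.exp (-(b ^ 2) * t) *
            Real.exp (-‖x‖ ^ 2 / (4 * t)) =
      (4 * π) ^ ((1 - (d : ℝ)) / 2) / (Real.Gamma k * (2 * b) ^ (2 * L + 1)) *
        ∑ l ∈ Finset.range (L + 1),
          ((2 * L - l).factorial : ℝ) / ((l.factorial : ℝ) * ((L - l).factorial : ℝ)) *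
            (2 * b * ‖x‖) ^ l * Real.exp (-(b * ‖x‖)) := by
  obtain ⟨m, hm⟩ := hd
  have hdk : d < 2 * k := by exact_mod_cast hk
  have hkm : k = L + m + 1 := by omega
  set r : ℝ := ‖x‖ with hr_def
  have hr : 0 < r := by
    rw [hr_def]
    exact norm_pos_iff.mpr hx
  have hexp_eq : (k : ℝ) - (d : ℝ) / 2 - 1 = (L:ℝ) - 1/2 := by
    subst hm hkm
    push_cast
    ring
  simp only [hexp_eq]
  rw [matern_closed hb hr L]
  have hsum : ∑ l ∈ Finset.range (L + 1),
      ((2 * L - l).factorial : ℝ) / ((l.factorial : ℝ) * ((L - l).factorial : ℝ)) *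
        (2 * b * r) ^ l * Real.exp (-(b * r))
      = (∑ l ∈ Finset.range (L+1), cc L l * (2*b*r)^l) * Real.exp (-(b*r)) := by
    rw [Finset.sum_mul]
    apply Finset.sum_congr rfl
    intro l hl
    rw [cc]
  rw [hsum]
  have hGamma : Real.Gamma k ≠ 0 := by
    have : (0:ℝ) < k := by
      have : 0 < k := by omega
      exact_mod_cast this
    exact (Real.Gamma_pos_of_pos this).ne'
  have h4pi : (0:ℝ) < 4 * π := by positivity
  have hcoef : (4 * π) ^ ((1 - (d : ℝ)) / 2) = (4 * π) ^ (-(d : ℝ) / 2) * (2 * Real.sqrt π) := by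
    rw [show (1 - (d : ℝ)) / 2 = -(d : ℝ)/2 + 1/2 by ring, Real.rpow_add h4pi]
    congr 1
    rw [← Real.sqrt_eq_rpow, show (4:ℝ)*π = 2^2*π by norm_num,
      Real.sqrt_mul (by positivity : (0:ℝ) ≤ 2^2), Real.sqrt_sq (by norm_num : (0:ℝ) ≤ 2)]
  rw [hcoef]
  have hPw : ((2*b)^(2*L+1) : ℝ) ≠ 0 := pow_ne_zero _ (by positivity)
  field_simp
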